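/- Let p₁, p₂, q₁, q₂ satisfy condition (★) and let X₁, …, X_n, Y be Banach spaces. Every continuous n-linear map T : X₁ × ⋯ × X_n → Y which is (q₁,p₁)-semi-integral is (q₂,p₂)-semi-integral. -/

import Mathlib

open scoped BigOperators

private lemma sum_rpow_le_rpow_sum' {ι : Type*} (s : Finset ι) (f : ι → ℝ)
    (hf : ∀ i ∈ s, 0 ≤ f i) {e : ℝ} (he : 1 ≤ e) :
    ∑ i ∈ s, f i ^ e ≤ (∑ i ∈ s, f i) ^ e := by
  have hs : 0 ≤ ∑ i ∈ s, f i := Finset.sum_nonneg hf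
  have key : ∀ i ∈ s, f i ^ e ≤ (∑ i ∈ s, f i) ^ (e - 1) * f i := by
    intro i hi
    have h1 : f i ^ e = f i ^ (e - 1) * f i := by
      have : f i ^ ((e - 1) + 1) = f i ^ (e - 1) * f i ^ (1 : ℝ) :=
        Real.rpow_add' (hf i hi) (by linarith)
      simpa [Real.rpow_one] using this
    rw [h1]
    exact mul_le_mul_of_nonneg_right
      (Real.rpow_le_rpow (hf i hi) (Finset.single_le_sum hf hi) (by linarith)) (hf i hi)
  calc ∑ i ∈ s, f i ^ e ≤ ∑ i ∈ s, (∑ i ∈ s, f i) ^ (e - 1) * f i :=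
        Finset.sum_le_sum key
    _ = (∑ i ∈ s, f i) ^ (e - 1) * ∑ i ∈ s, f i := by rw [← Finset.mul_sum]
    _ = (∑ i ∈ s, f i) ^ e := by
        have : (∑ i ∈ s, f i) ^ ((e - 1) + 1) = (∑ i ∈ s, f i) ^ (e - 1) * (∑ i ∈ s, f i) ^ (1:ℝ) :=
          Real.rpow_add' hs (by linarith)
        simpa [Real.rpow_one] using this.symm

private lemma rpow_rpow_inv' {c q : ℝ} (hc : 0 ≤ c) (hq : q ≠ 0) : (c ^ q) ^ (1 / q) = c := by
  rw [← Real.rpow_mul hc, mul_one_div, div_self hq, Real.rpow_one]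


/-- A continuous `n`-linear map `T : X₁ × ⋯ × X_n → Y` is `(q,p)`-semi-integral if there is
`C ≥ 0` with `(∑ⱼ ‖T(xⱼ¹,…,xⱼⁿ)‖^q)^{1/q} ≤ C (sup_{φᵢ ∈ B_{Xᵢ*}} ∑ⱼ |φ₁(xⱼ¹)⋯φₙ(xⱼⁿ)|^p)^{1/p}`
for all finite families. -/
def IsSemiIntegral {𝕜 : Type*} [RCLike 𝕜] {n : ℕ} {X : Fin n → Type*}
    [∀ i, NormedAddCommGroup (X i)] [∀ i, NormedSpace 𝕜 (X i)]
    {Y : Type*} [NormedAddCommGroup Y] [NormedSpace 𝕜 Y]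
    (q p : ℝ) (T : ContinuousMultilinearMap 𝕜 X Y) : Prop :=
  ∃ C : ℝ, 0 ≤ C ∧ ∀ (m : ℕ) (x : Fin m → ∀ i, X i),
    (∑ j, ‖T (x j)‖ ^ q) ^ (1 / q) ≤
      C * (⨆ φ : ∀ i, {φ : X i →L[𝕜] 𝕜 // ‖φ‖ ≤ 1},
        ∑ j, (∏ i, ‖(φ i).1 (x j i)‖) ^ p) ^ (1 / p)

/-- If `p₁, p₂, q₁, q₂` satisfy condition (★) and `X₁, …, X_n, Y` are
Banach spaces, every continuous `n`-linear `(q₁,p₁)`-semi-integral map is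
`(q₂,p₂)`-semi-integral. -/
theorem stmt6 {𝕜 : Type*} [RCLike 𝕜] {n : ℕ} {X : Fin n → Type*}
    [∀ i, NormedAddCommGroup (X i)] [∀ i, NormedSpace 𝕜 (X i)]
    [∀ i, CompleteSpace (X i)]
    {Y : Type*} [NormedAddCommGroup Y] [NormedSpace 𝕜 Y] [CompleteSpace Y]
    (p₁ p₂ q₁ q₂ : ℝ)
    (hp₁ : 1 ≤ p₁) (hp₁₂ : p₁ ≤ p₂) (hq₁ : 1 ≤ q₁) (hq₁₂ : q₁ ≤ q₂)
    (hpq₁ : p₁ ≤ q₁) (hpq₂ : p₂ ≤ q₂)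
    (hstar : 1 / p₁ - 1 / q₁ ≤ 1 / p₂ - 1 / q₂)
    (T : ContinuousMultilinearMap 𝕜 X Y)
    (hT : IsSemiIntegral q₁ p₁ T) :
    IsSemiIntegral q₂ p₂ T := by
  obtain ⟨C, hC0, hC⟩ := hT
  have hp₂1 : (1:ℝ) ≤ p₂ := hp₁.trans hp₁₂
  have hq₂1 : (1:ℝ) ≤ q₂ := hq₁.trans hq₁₂
  have hp₁0 : (0:ℝ) < p₁ := by linarith
  have hp₂0 : (0:ℝ) < p₂ := by linarith
  have hq₁0 : (0:ℝ) < q₁ := by linarith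
  have hq₂0 : (0:ℝ) < q₂ := by linarith
  refine ⟨C, hC0, fun m x => ?_⟩
  have hNE : Nonempty (∀ i, {φ : X i →L[𝕜] 𝕜 // ‖φ‖ ≤ 1}) :=
    ⟨fun i => ⟨0, by simp⟩⟩
  -- basic facts about products
  have hu0 : ∀ (j : Fin m) (φ : ∀ i, {φ : X i →L[𝕜] 𝕜 // ‖φ‖ ≤ 1}),
      (0:ℝ) ≤ ∏ i, ‖(φ i).1 (x j i)‖ :=
    fun j φ => Finset.prod_nonneg fun i _ => norm_nonneg _
  have huB : ∀ (j : Fin m) (φ : ∀ i, {φ : X i →L[𝕜] 𝕜 // ‖φ‖ ≤ 1}),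
      (∏ i, ‖(φ i).1 (x j i)‖) ≤ ∏ i, ‖x j i‖ := by
    intro j φ
    refine Finset.prod_le_prod (fun i _ => norm_nonneg _) fun i _ => ?_
    calc ‖(φ i).1 (x j i)‖ ≤ ‖(φ i).1‖ * ‖x j i‖ := (φ i).1.le_opNorm _
      _ ≤ 1 * ‖x j i‖ := mul_le_mul_of_nonneg_right (φ i).2 (norm_nonneg _)
      _ = ‖x j i‖ := one_mul _
  have hbdd : BddAbove (Set.range fun φ : ∀ i, {φ : X i →L[𝕜] 𝕜 // ‖φ‖ ≤ 1} =>
      ∑ j, (∏ i, ‖(φ i).1 (x j i)‖) ^ p₂) := by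
    refine ⟨∑ j, (∏ i, ‖x j i‖) ^ p₂, ?_⟩
    rintro _ ⟨φ, rfl⟩
    exact Finset.sum_le_sum fun j _ => Real.rpow_le_rpow (hu0 j φ) (huB j φ) hp₂0.le
  set S : ℝ := ⨆ φ : ∀ i, {φ : X i →L[𝕜] 𝕜 // ‖φ‖ ≤ 1},
      ∑ j, (∏ i, ‖(φ i).1 (x j i)‖) ^ p₂ with hS_def
  have hS0 : 0 ≤ S :=
    Real.iSup_nonneg fun φ => Finset.sum_nonneg fun j _ => Real.rpow_nonneg (hu0 j φ) _
  have hSle : ∀ φ : ∀ i, {φ : X i →L[𝕜] 𝕜 // ‖φ‖ ≤ 1},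
      ∑ j, (∏ i, ‖(φ i).1 (x j i)‖) ^ p₂ ≤ S := fun φ => le_ciSup hbdd φ
  have hRHS0 : 0 ≤ C * S ^ (1 / p₂) := mul_nonneg hC0 (Real.rpow_nonneg hS0 _)
  set A : ℝ := ∑ j, ‖T (x j)‖ ^ q₂ with hA_def
  have hA0 : 0 ≤ A := Finset.sum_nonneg fun j _ => Real.rpow_nonneg (norm_nonneg _) _
  -- the goal
  show A ^ (1 / q₂) ≤ C * S ^ (1 / p₂)
  rcases Nat.eq_zero_or_pos n with hn | hn
  · -- degenerate case n = 0
    subst hn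
    have hx : ∀ j : Fin m, x j = fun i => i.elim0 := fun j => Subsingleton.elim _ _
    set c : ℝ := ‖T fun i => i.elim0‖ with hc_def
    have hc0 : 0 ≤ c := norm_nonneg _
    have hprod : ∀ (j : Fin m) (φ : ∀ i : Fin 0, {φ : X i →L[𝕜] 𝕜 // ‖φ‖ ≤ 1}),
        (∏ i, ‖(φ i).1 (x j i)‖) = 1 := by
      intro j φ; simp
    rcases Nat.eq_zero_or_pos m with hm | hm
    · subst hm
      have : A = 0 := by simp [hA_def]
      rw [this, Real.zero_rpow (one_div_ne_zero hq₂0.ne')]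
      exact hRHS0
    · have hm1 : (1:ℝ) ≤ (m:ℝ) := Nat.one_le_cast.mpr hm
      have hm0 : (0:ℝ) < (m:ℝ) := by linarith
      have hSsum : ∀ p : ℝ, ∀ φ : ∀ i : Fin 0, {φ : X i →L[𝕜] 𝕜 // ‖φ‖ ≤ 1},
          ∑ j : Fin m, (∏ i, ‖(φ i).1 (x j i)‖) ^ p = (m : ℝ) := by
        intro p φ
        simp [hprod]
      have hSm : S = (m : ℝ) := by
        rw [hS_def]
        exact le_antisymm (ciSup_le fun φ => (hSsum p₂ φ).le)
          ((hSsum p₂ (Classical.arbitrary _)).symm.le.trans (le_ciSup hbdd _))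
      have hAm : A = (m:ℝ) * c ^ q₂ := by
        rw [hA_def]
        simp [fun j => congrArg (fun z => ‖T z‖) (hx j), hc_def, Finset.sum_const,
          nsmul_eq_mul]
      have hA1 : ∀ q : ℝ, 0 < q → ((m:ℝ) * c ^ q) ^ (1/q) = (m:ℝ) ^ (1/q) * c := by
        intro q hq
        rw [Real.mul_rpow hm0.le (Real.rpow_nonneg hc0 _), rpow_rpow_inv' hc0 hq.ne']
      -- use the hypothesis
      have hhyp := hC m x
      have hAm₁ : ∑ j : Fin m, ‖T (x j)‖ ^ q₁ = (m:ℝ) * c ^ q₁ := by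
        simp [fun j => congrArg (fun z => ‖T z‖) (hx j), hc_def, Finset.sum_const,
          nsmul_eq_mul]
      have hSm₁ : (⨆ φ : ∀ i : Fin 0, {φ : X i →L[𝕜] 𝕜 // ‖φ‖ ≤ 1},
          ∑ j : Fin m, (∏ i, ‖(φ i).1 (x j i)‖) ^ p₁) = (m:ℝ) := by
        rw [show (fun φ : ∀ i : Fin 0, {φ : X i →L[𝕜] 𝕜 // ‖φ‖ ≤ 1} =>
            ∑ j : Fin m, (∏ i, ‖(φ i).1 (x j i)‖) ^ p₁) = fun _ => (m:ℝ) from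
          funext fun φ => hSsum p₁ φ]
        exact ciSup_const
      rw [hAm₁, hSm₁, hA1 q₁ hq₁0] at hhyp
      rw [hAm, hSm, hA1 q₂ hq₂0]
      -- now : m^(1/q₁) * c ≤ C * m^(1/p₁) ⊢ m^(1/q₂) * c ≤ C * m^(1/p₂)
      have key : (m:ℝ) ^ (1/q₂) * c =
          (m:ℝ) ^ (1/q₂ - 1/q₁) * ((m:ℝ) ^ (1/q₁) * c) := by
        rw [← mul_assoc, ← Real.rpow_add hm0]; ring_nf
      rw [key]
      calc (m:ℝ) ^ (1/q₂ - 1/q₁) * ((m:ℝ) ^ (1/q₁) * c)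
          ≤ (m:ℝ) ^ (1/q₂ - 1/q₁) * (C * (m:ℝ) ^ (1/p₁)) :=
            mul_le_mul_of_nonneg_left hhyp (Real.rpow_nonneg hm0.le _)
        _ = C * (m:ℝ) ^ ((1/q₂ - 1/q₁) + 1/p₁) := by
            rw [Real.rpow_add hm0]; ring
        _ ≤ C * (m:ℝ) ^ (1/p₂) :=
            mul_le_mul_of_nonneg_left
              (Real.rpow_le_rpow_of_exponent_le hm1 (by linarith)) hC0
  · -- main case n > 0
    set i0 : Fin n := ⟨0, hn⟩ with hi0
    set t : ℝ := 1 / q₁ - 1 / q₂ with ht_def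
    have ht0 : 0 ≤ t := by
      have := one_div_le_one_div_of_le hq₁0 hq₁₂
      simp only [ht_def]; linarith
    set σ : Fin m → ℝ := fun j => ‖T (x j)‖ ^ (q₂ * t) with hσ_def
    have hσ0 : ∀ j, 0 ≤ σ j := fun j => Real.rpow_nonneg (norm_nonneg _) _
    set y : Fin m → ∀ i, X i :=
      fun j => Function.update (x j) i0 (((σ j : ℝ) : 𝕜) • x j i0) with hy_def
    have hσnorm : ∀ j, ‖((σ j : ℝ) : 𝕜)‖ = σ j := by
      intro j
      rw [RCLike.norm_ofReal, abs_of_nonneg (hσ0 j)]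
    -- F1
    have hF1 : ∀ j, ‖T (y j)‖ = σ j * ‖T (x j)‖ := by
      intro j
      rw [hy_def]
      simp only
      rw [ContinuousMultilinearMap.map_update_smul, norm_smul, hσnorm, Function.update_eq_self]
    -- F2
    have hF2 : ∀ (j : Fin m) (φ : ∀ i, {φ : X i →L[𝕜] 𝕜 // ‖φ‖ ≤ 1}),
        (∏ i, ‖(φ i).1 (y j i)‖) = σ j * ∏ i, ‖(φ i).1 (x j i)‖ := by
      intro j φ
      have hfun : (fun i => ‖(φ i).1 (y j i)‖) =
          Function.update (fun i => ‖(φ i).1 (x j i)‖) i0 (σ j * ‖(φ i0).1 (x j i0)‖) := by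
        funext i
        rcases eq_or_ne i i0 with rfl | hi
        · simp only [hy_def, Function.update_self, map_smul, smul_eq_mul, norm_mul, hσnorm]
        · simp only [hy_def, Function.update_of_ne hi]
      rw [hfun, Finset.prod_update_of_mem (Finset.mem_univ i0), mul_assoc,
        Finset.sdiff_singleton_eq_erase,
        Finset.mul_prod_erase Finset.univ (fun i => ‖(φ i).1 (x j i)‖) (Finset.mem_univ i0)]
    -- exponent identity
    have hq2t : 0 ≤ q₂ * t := mul_nonneg hq₂0.le ht0
    have he : (q₂ * t + 1) * q₁ = q₂ := by
      rw [ht_def]; field_simp; ring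
    have hterm : ∀ j, (σ j * ‖T (x j)‖) ^ q₁ = ‖T (x j)‖ ^ q₂ := by
      intro j
      have h0 : (0:ℝ) ≤ ‖T (x j)‖ := norm_nonneg _
      have h1 : σ j * ‖T (x j)‖ = ‖T (x j)‖ ^ (q₂ * t + 1) := by
        rw [Real.rpow_add' h0 (by positivity), Real.rpow_one, hσ_def]
      rw [h1, ← Real.rpow_mul h0, he]
    -- rewrite the hypothesis applied to y
    have hhyp := hC m y
    have hL : ∑ j, ‖T (y j)‖ ^ q₁ = A := by
      rw [hA_def]
      exact Finset.sum_congr rfl fun j _ => by rw [hF1 j, hterm j]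
    rw [hL] at hhyp
    -- termwise bound for each φ
    have haA : ∀ j : Fin m, ‖T (x j)‖ ^ q₂ ≤ A := by
      intro j
      rw [hA_def]
      exact Finset.single_le_sum (f := fun j : Fin m => ‖T (x j)‖ ^ q₂)
        (fun j _ => Real.rpow_nonneg (norm_nonneg _) _) (Finset.mem_univ j)
    have hσA : ∀ j, σ j ≤ A ^ t := by
      intro j
      rw [hσ_def]
      simp only
      rw [Real.rpow_mul (norm_nonneg _)]
      exact Real.rpow_le_rpow (Real.rpow_nonneg (norm_nonneg _) _) (haA j) ht0
    have hF5 : ∀ φ : ∀ i, {φ : X i →L[𝕜] 𝕜 // ‖φ‖ ≤ 1},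
        ∑ j, (∏ i, ‖(φ i).1 (y j i)‖) ^ p₁ ≤ A ^ (t * p₁) * S ^ (p₁ / p₂) := by
      intro φ
      have hrw : ∀ j : Fin m, (∏ i, ‖(φ i).1 (y j i)‖) ^ p₁ =
          σ j ^ p₁ * (∏ i, ‖(φ i).1 (x j i)‖) ^ p₁ := fun j => by
        rw [hF2 j φ, Real.mul_rpow (hσ0 j) (hu0 j φ)]
      rw [Finset.sum_congr rfl fun j _ => hrw j]
      rcases eq_or_lt_of_le hp₁₂ with heq | hlt
      · -- p₁ = p₂
        have hAt : 0 ≤ A ^ t := Real.rpow_nonneg hA0 _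
        calc ∑ j, σ j ^ p₁ * (∏ i, ‖(φ i).1 (x j i)‖) ^ p₁
            ≤ ∑ j, (A ^ t) ^ p₁ * (∏ i, ‖(φ i).1 (x j i)‖) ^ p₁ :=
              Finset.sum_le_sum fun j _ => mul_le_mul_of_nonneg_right
                (Real.rpow_le_rpow (hσ0 j) (hσA j) hp₁0.le)
                (Real.rpow_nonneg (hu0 j φ) _)
          _ = (A ^ t) ^ p₁ * ∑ j, (∏ i, ‖(φ i).1 (x j i)‖) ^ p₁ := by
              rw [← Finset.mul_sum]
          _ ≤ (A ^ t) ^ p₁ * S := by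
              refine mul_le_mul_of_nonneg_left ?_ (Real.rpow_nonneg hAt _)
              rw [heq]; exact hSle φ
          _ = A ^ (t * p₁) * S ^ (p₁ / p₂) := by
              rw [← Real.rpow_mul hA0, ← heq, div_self hp₁0.ne', Real.rpow_one]
      · -- p₁ < p₂ : Hölder
        have hd : (0:ℝ) < p₂ - p₁ := by linarith
        set α : ℝ := p₂ / (p₂ - p₁) with hα_def
        set β : ℝ := p₂ / p₁ with hβ_def
        have hα0 : 0 < α := div_pos hp₂0 hd
        have hβ0 : 0 < β := div_pos hp₂0 hp₁0
        have hconj : Real.HolderConjugate α β := by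
          rw [Real.holderConjugate_iff]
          constructor
          · rw [hα_def, lt_div_iff₀ hd]; linarith
          · rw [hα_def, hβ_def]
            rw [inv_div, inv_div]
            field_simp
            ring
        have hH := Real.inner_le_Lp_mul_Lq_of_nonneg Finset.univ hconj
          (f := fun j : Fin m => σ j ^ p₁)
          (g := fun j : Fin m => (∏ i, ‖(φ i).1 (x j i)‖) ^ p₁)
          (fun j _ => Real.rpow_nonneg (hσ0 j) _)
          (fun j _ => Real.rpow_nonneg (hu0 j φ) _)
        refine hH.trans ?_
        -- first factor
        have hfac1 : (∑ j, (σ j ^ p₁) ^ α) ^ (1 / α) ≤ A ^ (t * p₁) := by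
          have hσr : ∀ j, (σ j ^ p₁) ^ α = (‖T (x j)‖ ^ q₂) ^ (t * (p₁ * α)) := by
            intro j
            have h0 : (0:ℝ) ≤ ‖T (x j)‖ := norm_nonneg _
            rw [hσ_def]
            simp only
            rw [← Real.rpow_mul h0, ← Real.rpow_mul h0, ← Real.rpow_mul h0]
            congr 1
            ring
          have he1 : 1 ≤ t * (p₁ * α) := by
            have hpα : 0 < p₁ * α := mul_pos hp₁0 hα0
            have hr1 : (1/p₁ - 1/p₂) * (p₁ * α) = 1 := by
              rw [hα_def]; field_simp
            have ht' : 1/p₁ - 1/p₂ ≤ t := by rw [ht_def]; linarith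
            calc (1:ℝ) = (1/p₁ - 1/p₂) * (p₁ * α) := hr1.symm
              _ ≤ t * (p₁ * α) := mul_le_mul_of_nonneg_right ht' hpα.le
          have hsum : ∑ j, (σ j ^ p₁) ^ α ≤ A ^ (t * (p₁ * α)) := by
            rw [Finset.sum_congr rfl fun j _ => hσr j, hA_def]
            exact sum_rpow_le_rpow_sum' Finset.univ _
              (fun j _ => Real.rpow_nonneg (norm_nonneg _) _) he1
          have h1 : (∑ j, (σ j ^ p₁) ^ α) ^ (1/α) ≤ (A ^ (t * (p₁ * α))) ^ (1/α) :=
            Real.rpow_le_rpow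
              (Finset.sum_nonneg fun j _ => Real.rpow_nonneg (Real.rpow_nonneg (hσ0 j) _) _)
              hsum (by positivity)
          refine h1.trans_eq ?_
          rw [← Real.rpow_mul hA0]
          congr 1
          field_simp
        -- second factor
        have hfac2 : (∑ j, ((∏ i, ‖(φ i).1 (x j i)‖) ^ p₁) ^ β) ^ (1/β) ≤ S ^ (p₁ / p₂) := by
          have hur : ∀ j : Fin m, ((∏ i, ‖(φ i).1 (x j i)‖) ^ p₁) ^ β =
              (∏ i, ‖(φ i).1 (x j i)‖) ^ p₂ := by
            intro j
            rw [← Real.rpow_mul (hu0 j φ)]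
            congr 1
            rw [hβ_def]
            field_simp
          rw [Finset.sum_congr rfl fun j _ => hur j]
          have : S ^ (1/β) = S ^ (p₁ / p₂) := by
            congr 1
            rw [hβ_def, one_div_div]
          rw [← this]
          exact Real.rpow_le_rpow
            (Finset.sum_nonneg fun j _ => Real.rpow_nonneg (hu0 j φ) _) (hSle φ)
            (by positivity)
        have hf2nn : 0 ≤ (∑ j, ((∏ i, ‖(φ i).1 (x j i)‖) ^ p₁) ^ β) ^ (1/β) :=
          Real.rpow_nonneg
            (Finset.sum_nonneg fun j _ => Real.rpow_nonneg (Real.rpow_nonneg (hu0 j φ) _) _) _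
        exact mul_le_mul hfac1 hfac2 hf2nn (Real.rpow_nonneg hA0 _)
    -- finish
    have hsup0 : 0 ≤ ⨆ φ : ∀ i, {φ : X i →L[𝕜] 𝕜 // ‖φ‖ ≤ 1},
        ∑ j, (∏ i, ‖(φ i).1 (y j i)‖) ^ p₁ :=
      Real.iSup_nonneg fun φ => Finset.sum_nonneg fun j _ =>
        Real.rpow_nonneg (Finset.prod_nonneg fun i _ => norm_nonneg _) _
    have hsup : (⨆ φ : ∀ i, {φ : X i →L[𝕜] 𝕜 // ‖φ‖ ≤ 1},
        ∑ j, (∏ i, ‖(φ i).1 (y j i)‖) ^ p₁) ≤ A ^ (t * p₁) * S ^ (p₁ / p₂) :=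
      ciSup_le hF5
    have hkey : A ^ (1/q₁) ≤ C * (A ^ t * S ^ (1 / p₂)) := by
      refine hhyp.trans ?_
      have h2 : (⨆ φ : ∀ i, {φ : X i →L[𝕜] 𝕜 // ‖φ‖ ≤ 1},
          ∑ j, (∏ i, ‖(φ i).1 (y j i)‖) ^ p₁) ^ (1/p₁) ≤
          (A ^ (t * p₁) * S ^ (p₁ / p₂)) ^ (1/p₁) :=
        Real.rpow_le_rpow hsup0 hsup (by positivity)
      refine (mul_le_mul_of_nonneg_left h2 hC0).trans_eq ?_
      congr 1
      rw [Real.mul_rpow (Real.rpow_nonneg hA0 _) (Real.rpow_nonneg hS0 _),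
        ← Real.rpow_mul hA0, ← Real.rpow_mul hS0]
      congr 2
      · field_simp
      · field_simp
    rcases hA0.eq_or_lt with hA | hA
    · rw [← hA, Real.zero_rpow (one_div_ne_zero hq₂0.ne')]
      exact hRHS0
    · have hAt : (0:ℝ) < A ^ t := Real.rpow_pos_of_pos hA t
      have hsplit : A ^ (1/q₁) = A ^ t * A ^ (1/q₂) := by
        rw [← Real.rpow_add hA]
        congr 1
        rw [ht_def]; ring
      rw [hsplit] at hkey
      have : A ^ t * A ^ (1/q₂) ≤ A ^ t * (C * S ^ (1/p₂)) := by
        calc A ^ t * A ^ (1/q₂) ≤ C * (A ^ t * S ^ (1/p₂)) := hkey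
          _ = A ^ t * (C * S ^ (1/p₂)) := by ring
      exact le_of_mul_le_mul_left this hAt
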